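/- Let T > 0, m ≥ 0, let A₀, A₁ : ℝ × [0,T] → ℝ be continuous, and let u, v : ℝ × [0,T] → ℂ be C¹ solutions of the Dirac system (∂_t + ∂_x)u = −imv + i(A₀+A₁)u + 2i|v|²u + 2i Re(u v̄)v and (∂_t − ∂_x)v = −imu + i(A₀−A₁)v + 2i|u|²v + 2i Re(u v̄)u. Then for every x ∈ ℝ and every t ∈ [0,T], ∫₀^t 2|u(x+t−s, s)|² ds + ∫₀^t 2|v(x−t+s, s)|² ds = ∫_{x−t}^{x+t} (|u(y,0)|² + |v(y,0)|²) dy. -/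

import Mathlib

open MeasureTheory Set

lemma alg (a b : ℂ) (m A B : ℝ) :
    ((starRingEnd ℂ) a * (-Complex.I * (m:ℂ) * b + Complex.I * (A:ℂ) * a
        + 2 * Complex.I * ((‖b‖^2 : ℝ):ℂ) * a
        + 2 * Complex.I * (((a * (starRingEnd ℂ) b).re : ℝ):ℂ) * b)).re
    + ((starRingEnd ℂ) b * (-Complex.I * (m:ℂ) * a + Complex.I * (B:ℂ) * b
        + 2 * Complex.I * ((‖a‖^2 : ℝ):ℂ) * b
        + 2 * Complex.I * (((a * (starRingEnd ℂ) b).re : ℝ):ℂ) * a)).re = 0 := by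
  simp [pow_two, Complex.mul_re, Complex.mul_im, Complex.add_re, Complex.add_im]
  ring

lemma re_mul_add (z c w : ℂ) : (z * (c + w)).re = (z * c).re + (z * w).re := by
  rw [mul_add, Complex.add_re]

lemma re_mul_sub (z c w : ℂ) : (z * (c - w)).re = (z * c).re - (z * w).re := by
  rw [mul_sub, Complex.sub_re]

lemma re_mul_sub_smul (z c w : ℂ) (r : ℝ) :
    (z * (c - r • w)).re = (z * c).re - r * (z * w).re := by
  simp [Complex.real_smul, Complex.mul_re, Complex.sub_re, Complex.sub_im]
  ring

lemma re_mul_smul (z w : ℂ) (r : ℝ) : (z * (r • w)).re = r * (z * w).re := by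
  simp [Complex.real_smul, Complex.mul_re]
  ring

lemma normsq_hasDerivAt {g : ℝ → ℂ} {c : ℂ} {s : ℝ} (hg : HasDerivAt g c s) :
    HasDerivAt (fun s => ‖g s‖^2) (2 * ((starRingEnd ℂ) (g s) * c).re) s := by
  have hre : HasDerivAt (fun s => (g s).re) c.re s :=
    (Complex.reCLM.hasFDerivAt.comp_hasDerivAt s hg)
  have him : HasDerivAt (fun s => (g s).im) c.im s :=
    (Complex.imCLM.hasFDerivAt.comp_hasDerivAt s hg)
  have h := (hre.mul hre).add (him.mul him)
  have heq : (fun s => ‖g s‖^2) = fun s => (g s).re * (g s).re + (g s).im * (g s).im := by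
    funext s
    rw [← Complex.normSq_apply, ← Complex.sq_norm]
  rw [heq]
  refine h.congr_deriv ?_
  simp [Complex.mul_re]
  ring

lemma normsq_comp_hasDerivAt {f : ℝ × ℝ → ℂ} (hf : ContDiff ℝ 1 f)
    {γ : ℝ → ℝ × ℝ} {γ' : ℝ × ℝ} {s : ℝ} (hγ : HasDerivAt γ γ' s) :
    HasDerivAt (fun s => ‖f (γ s)‖^2)
      (2 * ((starRingEnd ℂ) (f (γ s)) * (fderiv ℝ f (γ s) γ')).re) s :=
  normsq_hasDerivAt (((hf.differentiable one_ne_zero (γ s)).hasFDerivAt).comp_hasDerivAt s hγ)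


lemma normsq_comp' {f : ℝ → ℝ → ℂ} (hf : ContDiff ℝ 1 (Function.uncurry f))
    {a b : ℝ → ℝ} {a' b' s : ℝ} (ha : HasDerivAt a a' s) (hb : HasDerivAt b b' s) :
    HasDerivAt (fun s => ‖f (a s) (b s)‖^2)
      (2 * ((starRingEnd ℂ) (f (a s) (b s)) *
        (fderiv ℝ (Function.uncurry f) (a s, b s) (a', b'))).re) s := by
  have := normsq_comp_hasDerivAt hf (ha.prodMk hb)
  simpa [Function.uncurry] using this

lemma deriv_t_eq {f : ℝ → ℝ → ℂ} (hf : ContDiff ℝ 1 (Function.uncurry f)) (y s : ℝ) :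
    deriv (fun τ => f y τ) s = fderiv ℝ (Function.uncurry f) (y, s) (0, 1) := by
  have hγ : HasDerivAt (fun τ => ((y, τ) : ℝ × ℝ)) ((0:ℝ), (1:ℝ)) s :=
    (hasDerivAt_const s y).prodMk (hasDerivAt_id s)
  exact (((hf.differentiable one_ne_zero (y, s)).hasFDerivAt).comp_hasDerivAt s hγ).deriv

lemma deriv_x_eq {f : ℝ → ℝ → ℂ} (hf : ContDiff ℝ 1 (Function.uncurry f)) (y s : ℝ) :
    deriv (fun ξ => f ξ s) y = fderiv ℝ (Function.uncurry f) (y, s) (1, 0) := by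
  have hγ : HasDerivAt (fun ξ => ((ξ, s) : ℝ × ℝ)) ((1:ℝ), (0:ℝ)) y :=
    (hasDerivAt_id y).prodMk (hasDerivAt_const y s)
  exact (((hf.differentiable one_ne_zero (y, s)).hasFDerivAt).comp_hasDerivAt y hγ).deriv

/-- The Dirac (spinor) part of the Maxwell–Dirac–Thirring–Gross–Neveu system on the
time slab `ℝ × [0,T]`, in null-coordinate form, with all coupling constants equal to `1`
and mass `m`:
`(∂_t + ∂_x)u = −imv + i(A₀+A₁)u + 2i|v|²u + 2i Re(u v̄)v`,
`(∂_t − ∂_x)v = −imu + i(A₀−A₁)v + 2i|u|²v + 2i Re(u v̄)u`. -/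
def DiracSystem (m T : ℝ) (A₀ A₁ : ℝ → ℝ → ℝ) (u v : ℝ → ℝ → ℂ) : Prop :=
  ∀ x : ℝ, ∀ t ∈ Set.Icc (0:ℝ) T,
    (deriv (fun τ => u x τ) t + deriv (fun ξ => u ξ t) x =
      -Complex.I * (m : ℂ) * v x t
      + Complex.I * ((A₀ x t + A₁ x t : ℝ) : ℂ) * u x t
      + 2 * Complex.I * ((‖v x t‖ ^ 2 : ℝ) : ℂ) * u x t
      + 2 * Complex.I * (((u x t * (starRingEnd ℂ) (v x t)).re : ℝ) : ℂ) * v x t)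
    ∧
    (deriv (fun τ => v x τ) t - deriv (fun ξ => v ξ t) x =
      -Complex.I * (m : ℂ) * u x t
      + Complex.I * ((A₀ x t - A₁ x t : ℝ) : ℂ) * v x t
      + 2 * Complex.I * ((‖u x t‖ ^ 2 : ℝ) : ℂ) * v x t
      + 2 * Complex.I * (((u x t * (starRingEnd ℂ) (v x t)).re : ℝ) : ℂ) * u x t)

lemma div_id {T m : ℝ} {A₀ A₁ : ℝ → ℝ → ℝ} {u v : ℝ → ℝ → ℂ}
    (hu : ContDiff ℝ 1 (Function.uncurry u)) (hv : ContDiff ℝ 1 (Function.uncurry v))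
    (hsol : DiracSystem m T A₀ A₁ u v) (y : ℝ) {s : ℝ} (hs : s ∈ Set.Icc (0:ℝ) T) :
    ((starRingEnd ℂ) (u y s) *
        (fderiv ℝ (Function.uncurry u) (y,s) (0,1) + fderiv ℝ (Function.uncurry u) (y,s) (1,0))).re
    + ((starRingEnd ℂ) (v y s) *
        (fderiv ℝ (Function.uncurry v) (y,s) (0,1) - fderiv ℝ (Function.uncurry v) (y,s) (1,0))).re
      = 0 := by
  obtain ⟨h1, h2⟩ := hsol y s hs
  rw [deriv_t_eq hu, deriv_x_eq hu] at h1
  rw [deriv_t_eq hv, deriv_x_eq hv] at h2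
  rw [h1, h2]
  exact alg (u y s) (v y s) m (A₀ y s + A₁ y s) (A₀ y s - A₁ y s)

set_option maxHeartbeats 2000000 in
/-- Local conservation of charge on backward light cones: for `C¹` solutions of the
Dirac system, for every `x ∈ ℝ` and `t ∈ [0,T]`,
`∫₀^t 2|u(x+t−s,s)|² ds + ∫₀^t 2|v(x−t+s,s)|² ds = ∫_{x−t}^{x+t} (|u(y,0)|² + |v(y,0)|²) dy`. -/
theorem local_charge_identity (T m : ℝ) (hT : 0 < T) (hm : 0 ≤ m)
    (A₀ A₁ : ℝ → ℝ → ℝ) (hA₀ : Continuous (Function.uncurry A₀))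
    (hA₁ : Continuous (Function.uncurry A₁))
    (u v : ℝ → ℝ → ℂ)
    (hu : ContDiff ℝ 1 (Function.uncurry u)) (hv : ContDiff ℝ 1 (Function.uncurry v))
    (hsol : DiracSystem m T A₀ A₁ u v) :
    ∀ x : ℝ, ∀ t ∈ Set.Icc (0:ℝ) T,
      (∫ s in (0:ℝ)..t, 2 * ‖u (x + t - s) s‖ ^ 2)
        + (∫ s in (0:ℝ)..t, 2 * ‖v (x - t + s) s‖ ^ 2)
        = ∫ y in (x - t)..(x + t), (‖u y 0‖ ^ 2 + ‖v y 0‖ ^ 2) := by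
  intro x t ht
  obtain ⟨ht0, htT⟩ := ht
  rcases eq_or_lt_of_le ht0 with h0 | ht0'
  · simp [← h0]
  -- basic continuity facts
  have hUc : Continuous (Function.uncurry u) := hu.continuous
  have hVc : Continuous (Function.uncurry v) := hv.continuous
  have hDuC : Continuous (fun p : ℝ × ℝ => fderiv ℝ (Function.uncurry u) p) :=
    hu.continuous_fderiv one_ne_zero
  have hDvC : Continuous (fun p : ℝ × ℝ => fderiv ℝ (Function.uncurry v) p) :=
    hv.continuous_fderiv one_ne_zero
  -- the rescaled density and its s-derivative
  obtain ⟨F, hFdef⟩ : ∃ F : ℝ → ℝ → ℝ, F = fun s θ =>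
    ‖u (x + (t - s) * θ) s‖^2 + ‖v (x + (t - s) * θ) s‖^2 := ⟨_, rfl⟩
  obtain ⟨F', hF'def⟩ : ∃ F' : ℝ → ℝ → ℝ, F' = fun s θ =>
    2 * ((starRingEnd ℂ) (u (x + (t - s) * θ) s) *
      (fderiv ℝ (Function.uncurry u) (x + (t - s) * θ, s) (-θ, 1))).re
    + 2 * ((starRingEnd ℂ) (v (x + (t - s) * θ) s) *
      (fderiv ℝ (Function.uncurry v) (x + (t - s) * θ, s) (-θ, 1))).re := ⟨_, rfl⟩
  have hPc : Continuous (fun q : ℝ × ℝ => ((x + (t - q.1) * q.2 : ℝ), q.1)) := by fun_prop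
  have hFc : Continuous (fun q : ℝ × ℝ => F q.1 q.2) := by
    simp only [hFdef]
    apply Continuous.add
    · exact ((hUc.comp hPc).norm.pow 2)
    · exact ((hVc.comp hPc).norm.pow 2)
  have hF'c : Continuous (fun q : ℝ × ℝ => F' q.1 q.2) := by
    simp only [hF'def]
    apply Continuous.add
    · apply Continuous.mul continuous_const
      apply Complex.continuous_re.comp
      apply Continuous.mul
      · exact Complex.continuous_conj.comp (hUc.comp hPc)
      · exact (hDuC.comp hPc).clm_apply (by fun_prop)
    · apply Continuous.mul continuous_const
      apply Complex.continuous_re.comp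
      apply Continuous.mul
      · exact Complex.continuous_conj.comp (hVc.comp hPc)
      · exact (hDvC.comp hPc).clm_apply (by fun_prop)
  have hFslice : ∀ s : ℝ, Continuous (fun θ : ℝ => F s θ) := by
    intro s
    have h : Continuous (fun θ : ℝ => ((s, θ) : ℝ × ℝ)) := continuous_const.prodMk continuous_id
    exact hFc.comp h
  have hF'slice : ∀ s : ℝ, Continuous (fun θ : ℝ => F' s θ) := by
    intro s
    have h : Continuous (fun θ : ℝ => ((s, θ) : ℝ × ℝ)) := continuous_const.prodMk continuous_id
    exact hF'c.comp h
  -- s-derivative of the integrand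
  have hD : ∀ θ s : ℝ, HasDerivAt (fun s => F s θ) (F' s θ) s := by
    intro θ s
    have h0 : HasDerivAt (fun s : ℝ => x + (t - s) * θ) (-θ) s := by
      simpa using ((((hasDerivAt_id s).const_sub t).mul_const θ).const_add x)
    have h1 := (normsq_comp' hu h0 (hasDerivAt_id s)).add (normsq_comp' hv h0 (hasDerivAt_id s))
    rw [hFdef, hF'def]
    exact h1
  -- differentiation under the integral sign
  have hh : ∀ s₀ : ℝ, HasDerivAt (fun s => ∫ θ in (-1:ℝ)..1, F s θ)
      (∫ θ in (-1:ℝ)..1, F' s₀ θ) s₀ := by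
    intro s₀
    obtain ⟨C, hC⟩ :=
      ((isCompact_Icc (a := s₀ - 1) (b := s₀ + 1)).prod
        (isCompact_Icc (a := (-1:ℝ)) (b := 1))).exists_bound_of_continuousOn
        hF'c.continuousOn
    refine (intervalIntegral.hasDerivAt_integral_of_dominated_loc_of_deriv_le
        (F := F) (F' := F') (bound := fun _ => C) (Metric.ball_mem_nhds s₀ one_pos) ?_ ?_ ?_ ?_ ?_ ?_).2
    · exact Filter.Eventually.of_forall fun s => (hFslice s).aestronglyMeasurable
    · exact (hFslice s₀).intervalIntegrable _ _
    · exact (hF'slice s₀).aestronglyMeasurable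
    · refine Filter.Eventually.of_forall fun θ hθ s hs => ?_
      apply hC (s, θ)
      constructor
      · have h1 := Metric.mem_ball.mp hs
        rw [Real.dist_eq] at h1
        have h2 := abs_lt.mp h1
        exact ⟨by linarith [h2.1], by linarith [h2.2]⟩
      · rw [Set.uIoc_of_le (by norm_num : (-1:ℝ) ≤ 1)] at hθ
        exact Set.Ioc_subset_Icc_self hθ
    · exact intervalIntegrable_const
    · exact Filter.Eventually.of_forall fun θ _ s _ => hD θ s
  -- derivative of g s = (t - s) * h s
  have hgd : ∀ s : ℝ, HasDerivAt (fun s => (t - s) * ∫ θ in (-1:ℝ)..1, F s θ)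
      (-(∫ θ in (-1:ℝ)..1, F s θ) + (t - s) * ∫ θ in (-1:ℝ)..1, F' s θ) s := by
    intro s
    have := ((hasDerivAt_id s).const_sub t).mul (hh s)
    refine this.congr_deriv ?_
    simp only [id_eq]
    ring
  -- the key evaluation of the derivative on [0, t]
  have hkey : ∀ s ∈ Set.Icc (0:ℝ) t,
      (t - s) * (∫ θ in (-1:ℝ)..1, F' s θ)
        = (∫ θ in (-1:ℝ)..1, F s θ)
          - (2 * ‖u (x + t - s) s‖^2 + 2 * ‖v (x - t + s) s‖^2) := by
    intro s hs
    have hsT : s ∈ Set.Icc (0:ℝ) T := ⟨hs.1, hs.2.trans htT⟩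
    -- θ-derivatives
    obtain ⟨G, hGdef⟩ : ∃ G : ℝ → ℝ, G = fun θ =>
      2 * ((starRingEnd ℂ) (u (x + (t - s) * θ) s) *
        (fderiv ℝ (Function.uncurry u) (x + (t - s) * θ, s) ((t - s), 0))).re
      + 2 * ((starRingEnd ℂ) (v (x + (t - s) * θ) s) *
        (fderiv ℝ (Function.uncurry v) (x + (t - s) * θ, s) ((t - s), 0))).re := ⟨_, rfl⟩
    obtain ⟨GJ, hGJdef⟩ : ∃ GJ : ℝ → ℝ, GJ = fun θ =>
      2 * ((starRingEnd ℂ) (u (x + (t - s) * θ) s) *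
        (fderiv ℝ (Function.uncurry u) (x + (t - s) * θ, s) ((t - s), 0))).re
      - 2 * ((starRingEnd ℂ) (v (x + (t - s) * θ) s) *
        (fderiv ℝ (Function.uncurry v) (x + (t - s) * θ, s) ((t - s), 0))).re := ⟨_, rfl⟩
    obtain ⟨K, hKdef⟩ : ∃ K : ℝ → ℝ, K = fun θ =>
      θ * F s θ + (‖u (x + (t - s) * θ) s‖^2 - ‖v (x + (t - s) * θ) s‖^2) := ⟨_, rfl⟩
    obtain ⟨K', hK'def⟩ : ∃ K' : ℝ → ℝ, K' = fun θ => F s θ + θ * G θ + GJ θ := ⟨_, rfl⟩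
    have hγθ : ∀ θ : ℝ, HasDerivAt (fun θ : ℝ => x + (t - s) * θ) (t - s) θ := by
      intro θ
      simpa using (((hasDerivAt_id θ).const_mul (t - s)).const_add x)
    have hFθ : ∀ θ : ℝ, HasDerivAt (fun θ => F s θ) (G θ) θ := by
      intro θ
      have h1 := (normsq_comp' hu (hγθ θ) (hasDerivAt_const θ s)).add
        (normsq_comp' hv (hγθ θ) (hasDerivAt_const θ s))
      rw [hFdef, hGdef]
      exact h1
    have hJθ : ∀ θ : ℝ, HasDerivAt
        (fun θ => ‖u (x + (t - s) * θ) s‖^2 - ‖v (x + (t - s) * θ) s‖^2) (GJ θ) θ := by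
      intro θ
      have h1 := (normsq_comp' hu (hγθ θ) (hasDerivAt_const θ s)).sub
        (normsq_comp' hv (hγθ θ) (hasDerivAt_const θ s))
      rw [hGJdef]
      exact h1
    have hK : ∀ θ : ℝ, HasDerivAt K (K' θ) θ := by
      intro θ
      have h1 := ((hasDerivAt_id θ).mul (hFθ θ)).add (hJθ θ)
      rw [hKdef, hK'def]
      exact h1.congr_deriv (by simp)
    -- continuity of pieces in θ
    have hPsc : Continuous (fun θ : ℝ => ((x + (t - s) * θ : ℝ), s)) := by fun_prop
    have hGc : Continuous G := by
      rw [hGdef]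
      apply Continuous.add
      · exact continuous_const.mul (Complex.continuous_re.comp
          ((Complex.continuous_conj.comp (hUc.comp hPsc)).mul
            ((hDuC.comp hPsc).clm_apply continuous_const)))
      · exact continuous_const.mul (Complex.continuous_re.comp
          ((Complex.continuous_conj.comp (hVc.comp hPsc)).mul
            ((hDvC.comp hPsc).clm_apply continuous_const)))
    have hGJc : Continuous GJ := by
      rw [hGJdef]
      apply Continuous.sub
      · exact continuous_const.mul (Complex.continuous_re.comp
          ((Complex.continuous_conj.comp (hUc.comp hPsc)).mul
            ((hDuC.comp hPsc).clm_apply continuous_const)))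
      · exact continuous_const.mul (Complex.continuous_re.comp
          ((Complex.continuous_conj.comp (hVc.comp hPsc)).mul
            ((hDvC.comp hPsc).clm_apply continuous_const)))
    have hFsc : Continuous (fun θ : ℝ => F s θ) := hFslice s
    have hK'c : Continuous K' := by
      rw [hK'def]
      exact (hFsc.add (continuous_id.mul hGc)).add hGJc
    -- FTC in θ
    have hFTC : ∫ θ in (-1:ℝ)..1, K' θ = K 1 - K (-1) :=
      intervalIntegral.integral_eq_sub_of_hasDerivAt (fun θ _ => hK θ)
        (hK'c.intervalIntegrable _ _)
    -- pointwise identity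
    have hpt : ∀ θ : ℝ, (t - s) * F' s θ = F s θ - K' θ := by
      intro θ
      have hdiv := div_id hu hv hsol (x + (t - s) * θ) hsT
      have e1 : ((-θ : ℝ), (1:ℝ)) = ((0:ℝ), (1:ℝ)) - θ • ((1:ℝ), (0:ℝ)) := by
        simp [Prod.ext_iff]
      have e2 : (((t - s) : ℝ), (0:ℝ)) = (t - s) • ((1:ℝ), (0:ℝ)) := by
        simp [Prod.ext_iff]
      simp only [re_mul_add, re_mul_sub] at hdiv
      simp only [hF'def, hK'def, hGdef, hGJdef, e1, e2, map_sub, _root_.map_smul,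
        re_mul_sub_smul, re_mul_smul, re_mul_add, re_mul_sub]
      linear_combination (2 * (t - s)) * hdiv
    -- put it together
    calc (t - s) * (∫ θ in (-1:ℝ)..1, F' s θ)
        = ∫ θ in (-1:ℝ)..1, (t - s) * F' s θ := by
          rw [intervalIntegral.integral_const_mul]
      _ = ∫ θ in (-1:ℝ)..1, (F s θ - K' θ) := by
          exact intervalIntegral.integral_congr fun θ _ => hpt θ
      _ = (∫ θ in (-1:ℝ)..1, F s θ) - ∫ θ in (-1:ℝ)..1, K' θ := by
          exact intervalIntegral.integral_sub (hFsc.intervalIntegrable _ _)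
            (hK'c.intervalIntegrable _ _)
      _ = (∫ θ in (-1:ℝ)..1, F s θ)
          - (2 * ‖u (x + t - s) s‖^2 + 2 * ‖v (x - t + s) s‖^2) := by
          rw [hFTC]
          have a1 : x + (t - s) * 1 = x + t - s := by ring
          have a2 : x + (t - s) * (-1) = x - t + s := by ring
          simp only [hKdef, hFdef, a1, a2]
          ring
  -- g has the right derivative on [0, t]
  have hg : ∀ s ∈ Set.Icc (0:ℝ) t,
      HasDerivAt (fun s => -((t - s) * ∫ θ in (-1:ℝ)..1, F s θ))
        (2 * ‖u (x + t - s) s‖^2 + 2 * ‖v (x - t + s) s‖^2) s := by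
    intro s hs
    have := (hgd s).neg
    refine this.congr_deriv ?_
    rw [hkey s hs]
    ring
  -- FTC in s
  have hwc : Continuous (fun s : ℝ => 2 * ‖u (x + t - s) s‖^2) := by
    have : Continuous (fun s : ℝ => ((x + t - s : ℝ), s)) := by fun_prop
    exact continuous_const.mul ((hUc.comp this).norm.pow 2)
  have hwc' : Continuous (fun s : ℝ => 2 * ‖v (x - t + s) s‖^2) := by
    have : Continuous (fun s : ℝ => ((x - t + s : ℝ), s)) := by fun_prop
    exact continuous_const.mul ((hVc.comp this).norm.pow 2)
  have hFTCs : ∫ s in (0:ℝ)..t, (2 * ‖u (x + t - s) s‖^2 + 2 * ‖v (x - t + s) s‖^2)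
      = -((t - t) * ∫ θ in (-1:ℝ)..1, F t θ) - -((t - 0) * ∫ θ in (-1:ℝ)..1, F 0 θ) :=
    intervalIntegral.integral_eq_sub_of_hasDerivAt
      (f := fun s => -((t - s) * ∫ θ in (-1:ℝ)..1, F s θ))
      (f' := fun s => 2 * ‖u (x + t - s) s‖^2 + 2 * ‖v (x - t + s) s‖^2)
      (fun s hs => hg s (by rwa [Set.uIcc_of_le ht0] at hs))
      ((hwc.add hwc').intervalIntegrable _ _)
  have hgt : -((t - t) * ∫ θ in (-1:ℝ)..1, F t θ) = 0 := by simp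
  -- evaluate g 0
  have hg0 : (t - 0) * ∫ θ in (-1:ℝ)..1, F 0 θ
      = ∫ y in (x - t)..(x + t), (‖u y 0‖^2 + ‖v y 0‖^2) := by
    have harg : (fun θ : ℝ => F 0 θ)
        = fun θ : ℝ => (fun y => ‖u y 0‖^2 + ‖v y 0‖^2) (t * θ + x) := by
      funext θ
      simp only [hFdef]
      rw [show x + (t - 0) * θ = t * θ + x from by ring]
    rw [show (∫ θ in (-1:ℝ)..1, F 0 θ)
        = ∫ θ in (-1:ℝ)..1, (fun y => ‖u y 0‖^2 + ‖v y 0‖^2) (t * θ + x) from by rw [harg]]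
    rw [intervalIntegral.integral_comp_mul_add (fun y => ‖u y 0‖^2 + ‖v y 0‖^2) ht0'.ne' x]
    rw [show t * (-1) + x = x - t from by ring, show t * 1 + x = x + t from by ring]
    simp [smul_eq_mul]
    field_simp
  -- final assembly
  have hsplit : ∫ s in (0:ℝ)..t, (2 * ‖u (x + t - s) s‖^2 + 2 * ‖v (x - t + s) s‖^2)
      = (∫ s in (0:ℝ)..t, 2 * ‖u (x + t - s) s‖^2)
        + (∫ s in (0:ℝ)..t, 2 * ‖v (x - t + s) s‖^2) :=
    intervalIntegral.integral_add (hwc.intervalIntegrable _ _) (hwc'.intervalIntegrable _ _)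
  rw [← hsplit, hFTCs, hgt, zero_sub, neg_neg, hg0]
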